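/- Let P be a finite poset. For every antitone function μ : P → ℝ with values in [0,1] there exists a finitely supported probability distribution p on the collection of lower sets of P (nonnegative weights on lower sets summing to 1) such that for every x ∈ P, μ(x) = p({D : D is a lower set of P and x ∈ D}). In other words, the marginal map from probability distributions on lower sets of P to antitone [0,1]-valued functions on P is surjective. -/

import Mathlib

open scoped Classical

/-- A delta distribution at a lower set realizes its indicator function. -/
private lemma delta_lemma {P : Type*} [Fintype P] [PartialOrder P]
    (D₀ : Finset P) (hD₀ : IsLowerSet (↑D₀ : Set P)) (μ : P → ℝ)
    (hind : ∀ x, μ x = if x ∈ D₀ then 1 else 0) :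
    ∃ p : Finset P → ℝ,
      (∀ D, 0 ≤ p D) ∧
      (∀ D : Finset P, ¬ IsLowerSet (↑D : Set P) → p D = 0) ∧
      (∑ D : Finset P, p D = 1) ∧
      ∀ x, μ x = ∑ D ∈ Finset.univ.filter
        (fun D : Finset P => IsLowerSet (↑D : Set P) ∧ x ∈ D), p D := by
  refine ⟨fun D => if D = D₀ then 1 else 0, ?_, ?_, ?_, ?_⟩
  · intro D; dsimp only; split <;> norm_num
  · intro D hD; dsimp only; rw [if_neg]; rintro rfl; exact hD hD₀
  · simp
  · intro x
    rw [Finset.sum_ite_eq' _ D₀ (fun _ => (1 : ℝ)), hind x]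
    simp [hD₀]

private lemma aux_lemma {P : Type*} [Fintype P] [PartialOrder P] :
    ∀ n (μ : P → ℝ), (∀ x, μ x ∈ Set.Icc (0 : ℝ) 1) → Antitone μ →
      (Finset.univ.filter (fun x => μ x ≠ 0)).card ≤ n →
      ∃ p : Finset P → ℝ,
        (∀ D, 0 ≤ p D) ∧
        (∀ D : Finset P, ¬ IsLowerSet (↑D : Set P) → p D = 0) ∧
        (∑ D : Finset P, p D = 1) ∧
        ∀ x, μ x = ∑ D ∈ Finset.univ.filter
          (fun D : Finset P => IsLowerSet (↑D : Set P) ∧ x ∈ D), p D := by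
  intro n
  induction n with
  | zero =>
    intro μ hμ01 hμ hcard
    have hzero : ∀ x, μ x = 0 := by
      intro x
      by_contra hx
      have : x ∈ Finset.univ.filter (fun x => μ x ≠ 0) := by simp [hx]
      have := Finset.card_pos.mpr ⟨x, this⟩
      omega
    refine delta_lemma ∅ ?_ μ ?_
    · simp [IsLowerSet]
    · intro x; simp [hzero x]
  | succ n ih =>
    intro μ hμ01 hμ hcard
    set S := Finset.univ.filter (fun x => μ x ≠ 0) with hS
    by_cases hSe : S = ∅
    · refine ih μ hμ01 hμ ?_
      rw [show Finset.univ.filter (fun x => μ x ≠ 0) = ∅ from hSe]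
      simp
    have hSne : S.Nonempty := Finset.nonempty_of_ne_empty hSe
    set m := S.inf' hSne μ with hm
    obtain ⟨x₀, hx₀S, hx₀⟩ := Finset.exists_mem_eq_inf' hSne μ
    have hmem_iff : ∀ x, x ∈ S ↔ μ x ≠ 0 := by intro x; simp [hS]
    have hpos : ∀ x, 0 ≤ μ x := fun x => (hμ01 x).1
    have hle1 : ∀ x, μ x ≤ 1 := fun x => (hμ01 x).2
    have hmpos : 0 < m := by
      rw [hm, hx₀]
      have := (hmem_iff x₀).1 hx₀S
      exact lt_of_le_of_ne (hpos x₀) (Ne.symm this)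
    have hm_le : ∀ x, x ∈ S → m ≤ μ x := fun x hx => Finset.inf'_le μ hx
    have hm1 : m ≤ 1 := hm ▸ hx₀ ▸ hle1 x₀
    have hDlower : IsLowerSet (↑S : Set P) := by
      intro a b hba ha
      have ha' : a ∈ S := Finset.mem_coe.mp ha
      have hma : 0 < μ a := lt_of_lt_of_le hmpos (hm_le a ha')
      have hb : μ b ≠ 0 := by have := hμ hba; intro h; linarith
      exact Finset.mem_coe.mpr ((hmem_iff b).2 hb)
    -- indicator equality helper
    have hindD : ∀ x, x ∈ S ↔ 0 < μ x := by
      intro x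
      rw [hmem_iff]
      constructor
      · intro h; exact lt_of_le_of_ne (hpos x) (Ne.symm h)
      · intro h; exact ne_of_gt h
    by_cases hm1' : m = 1
    · -- μ is the indicator of S
      refine delta_lemma S hDlower μ ?_
      intro x
      by_cases hx : x ∈ S
      · rw [if_pos hx]
        have := hm_le x hx
        have := hle1 x
        linarith [hm1' ▸ hm_le x hx]
      · rw [if_neg hx]
        by_contra h
        exact hx ((hmem_iff x).2 h)
    · have hmlt1 : m < 1 := lt_of_le_of_ne hm1 hm1'
      have h1m : (0:ℝ) < 1 - m := by linarith
      set ν : P → ℝ := fun x => (μ x - m * (if x ∈ S then 1 else 0)) / (1 - m) with hν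
      have hν_eq : ∀ x, μ x = m * (if x ∈ S then 1 else 0) + (1 - m) * ν x := by
        intro x
        rw [hν]
        field_simp
        ring
      have hν_nonneg : ∀ x, 0 ≤ ν x := by
        intro x
        apply div_nonneg _ (le_of_lt h1m)
        by_cases hx : x ∈ S
        · rw [if_pos hx]; have := hm_le x hx; linarith
        · rw [if_neg hx]
          have : μ x = 0 := by by_contra h; exact hx ((hmem_iff x).2 h)
          linarith
      have hν01 : ∀ x, ν x ∈ Set.Icc (0:ℝ) 1 := by
        intro x
        refine ⟨hν_nonneg x, ?_⟩
        rw [hν, div_le_one h1m]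
        by_cases hx : x ∈ S
        · rw [if_pos hx]; have := hle1 x; linarith
        · rw [if_neg hx]
          have : μ x = 0 := by by_contra h; exact hx ((hmem_iff x).2 h)
          linarith
      have hν_anti : Antitone ν := by
        intro a b hab
        have key : μ b - m * (if b ∈ S then 1 else 0)
            ≤ μ a - m * (if a ∈ S then 1 else 0) := by
          by_cases hb : b ∈ S
          · have ha : a ∈ S := hDlower hab hb
            rw [if_pos hb, if_pos ha]
            have := hμ hab
            linarith
          · rw [if_neg hb]
            have hμb : μ b = 0 := by by_contra h; exact hb ((hmem_iff b).2 h)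
            by_cases ha : a ∈ S
            · rw [if_pos ha]; have := hm_le a ha; linarith
            · rw [if_neg ha]
              have hμa : μ a = 0 := by by_contra h; exact ha ((hmem_iff a).2 h)
              linarith
        exact (div_le_div_iff_of_pos_right h1m).mpr key
      have hνx₀ : ν x₀ = 0 := by
        have hx₀' : μ x₀ = m := hx₀.symm
        simp only [hν]
        rw [if_pos hx₀S, hx₀']
        ring_nf
      have hsub : Finset.univ.filter (fun x => ν x ≠ 0) ⊂ S := by
        constructor
        · intro x hx
          simp only [Finset.mem_filter, Finset.mem_univ, true_and] at hx
          rw [hmem_iff]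
          intro hμx
          apply hx
          have hxS : x ∉ S := fun h => ((hmem_iff x).1 h) hμx
          simp only [hν]
          rw [if_neg hxS, hμx]
          ring_nf
        · intro hsup
          have := hsup hx₀S
          simp only [Finset.mem_filter, Finset.mem_univ, true_and] at this
          exact this hνx₀
      have hcard' : (Finset.univ.filter (fun x => ν x ≠ 0)).card ≤ n := by
        have := Finset.card_lt_card hsub
        omega
      obtain ⟨p', hp'0, hp'low, hp'sum, hp'marg⟩ := ih ν hν01 hν_anti hcard'
      refine ⟨fun D => m * (if D = S then 1 else 0) + (1 - m) * p' D, ?_, ?_, ?_, ?_⟩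
      · intro D
        dsimp only
        have h1 : (0:ℝ) ≤ (if D = S then (1:ℝ) else 0) := by split <;> norm_num
        have h2 := mul_nonneg hmpos.le h1
        have h3 := mul_nonneg h1m.le (hp'0 D)
        linarith
      · intro D hD
        dsimp only
        rw [hp'low D hD, if_neg (by rintro rfl; exact hD hDlower)]
        ring
      · rw [Finset.sum_add_distrib, ← Finset.mul_sum, ← Finset.mul_sum,
          Finset.sum_ite_eq' Finset.univ S (fun _ => (1:ℝ)), hp'sum]
        simp
      · intro x
        rw [Finset.sum_add_distrib, ← Finset.mul_sum, ← Finset.mul_sum,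
          Finset.sum_ite_eq' _ S (fun _ => (1:ℝ)), ← hp'marg x, hν_eq x]
        by_cases hx : x ∈ S <;> simp [hDlower, hx]

/-- Every antitone `[0,1]`-valued function on a finite poset is the marginal of a
finitely supported probability distribution on the lower sets of the poset. -/
theorem stmt1 {P : Type*} [Fintype P] [PartialOrder P]
    (μ : P → ℝ) (hμ01 : ∀ x, μ x ∈ Set.Icc (0 : ℝ) 1) (hμ : Antitone μ) :
    ∃ p : Finset P → ℝ,
      (∀ D, 0 ≤ p D) ∧
      (∀ D : Finset P, ¬ IsLowerSet (↑D : Set P) → p D = 0) ∧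
      (∑ D : Finset P, p D = 1) ∧
      ∀ x, μ x = ∑ D ∈ Finset.univ.filter
        (fun D : Finset P => IsLowerSet (↑D : Set P) ∧ x ∈ D), p D :=
  aux_lemma _ μ hμ01 hμ le_rfl
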